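/- (Daniels & Velikova, Theorem 3.1) Let S ⊂ ℝ^d be compact and let f: S → ℝ be continuous and coordinatewise non-decreasing. Then for every ε > 0 there exists a feedforward neural network with at most d hidden layers, logistic sigmoid activations σ(t) = 1/(1+exp(−t)) applied coordinatewise in all hidden layers, a single linear output neuron, all weights nonnegative, and arbitrary real biases, whose output function N satisfies |f(x) − N(x)| < ε for all x ∈ S. -/

import Mathlib

/-- The logistic sigmoid `σ(t) = 1/(1+exp(−t))`. -/
noncomputable def logisticSigmoid (t : ℝ) : ℝ := 1 / (1 + Real.exp (-t))

/-- Hidden representation after `L` hidden layers of a feedforward network with logistic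
sigmoid activations applied coordinatewise:
`x^(0) = x` and `x^(l+1) = σ(W_{l+1} x^(l) + b_{l+1})`. -/
noncomputable def sigmoidLayers (dims : ℕ → ℕ)
    (W : (l : ℕ) → Fin (dims (l + 1)) → Fin (dims l) → ℝ)
    (b : (l : ℕ) → Fin (dims (l + 1)) → ℝ) :
    (L : ℕ) → (Fin (dims 0) → ℝ) → Fin (dims L) → ℝ
  | 0, x => x
  | L + 1, x => fun i =>
      logisticSigmoid ((∑ m, W L i m * sigmoidLayers dims W b L x m) + b L i)

open Real Finset

lemma one_add_exp_pos (t : ℝ) : 0 < 1 + Real.exp (-t) := by positivity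

lemma sig_pos (t : ℝ) : 0 < logisticSigmoid t := by
  unfold logisticSigmoid; positivity

lemma sig_lt_one (t : ℝ) : logisticSigmoid t < 1 := by
  unfold logisticSigmoid
  rw [div_lt_one (one_add_exp_pos t)]
  linarith [Real.exp_pos (-t)]

lemma sig_le_exp (t : ℝ) : logisticSigmoid t ≤ Real.exp t := by
  unfold logisticSigmoid
  rw [div_le_iff₀ (one_add_exp_pos t)]
  have h := Real.exp_pos t
  have h2 : Real.exp t * Real.exp (-t) = 1 := by
    rw [← Real.exp_add]; simp
  nlinarith

lemma one_sub_sig_le (t : ℝ) : 1 - logisticSigmoid t ≤ Real.exp (-t) := by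
  unfold logisticSigmoid
  have h := one_add_exp_pos t
  have h1 : 1 - 1/(1+Real.exp (-t)) = Real.exp (-t) / (1 + Real.exp (-t)) := by field_simp; ring
  rw [h1]
  exact div_le_self (le_of_lt (Real.exp_pos _)) (by linarith [Real.exp_pos (-t)])

lemma hasDerivAt_sig (v : ℝ) :
    HasDerivAt logisticSigmoid (1/4 - (logisticSigmoid v - 1/2)^2) v := by
  have h2 : HasDerivAt (fun v : ℝ => -v) (-1) v := (hasDerivAt_id v).neg
  have h3 := (Real.hasDerivAt_exp (-v)).comp v h2
  have h1 : HasDerivAt (fun v : ℝ => 1 + Real.exp (-v)) (-Real.exp (-v)) v := by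
    simpa using h3.const_add 1
  have hne : (1 + Real.exp (-v)) ≠ 0 := by positivity
  have h4 : HasDerivAt (fun v : ℝ => (1 + Real.exp (-v))⁻¹) _ v := h1.inv hne
  have heq : logisticSigmoid = fun v : ℝ => (1 + Real.exp (-v))⁻¹ := by
    funext t; simp [logisticSigmoid, one_div]
  rw [heq]
  convert h4 using 1
  have hE := Real.exp_pos (-v)
  field_simp
  ring

lemma sig_near_half (v : ℝ) : |logisticSigmoid v - 1/2| ≤ |v|/4 := by
  have key : ∀ x ∈ Set.univ, HasDerivWithinAt logisticSigmoid
      (1/4 - (logisticSigmoid x - 1/2)^2) Set.univ x :=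
    fun x _ => (hasDerivAt_sig x).hasDerivWithinAt
  have hb : ∀ x ∈ Set.univ, ‖(1/4 - (logisticSigmoid x - 1/2)^2 : ℝ)‖ ≤ 1/4 := by
    intro x _
    have h1 : 0 < logisticSigmoid x := sig_pos x
    have h2 : logisticSigmoid x < 1 := sig_lt_one x
    rw [Real.norm_eq_abs, abs_le]; constructor <;> nlinarith
  have h := Convex.norm_image_sub_le_of_norm_hasDerivWithin_le key hb convex_univ
    (Set.mem_univ 0) (Set.mem_univ v)
  have hσ0 : logisticSigmoid 0 = 1/2 := by norm_num [logisticSigmoid]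
  rw [hσ0, Real.norm_eq_abs, Real.norm_eq_abs, sub_zero] at h
  linarith

lemma sig_taylor (v : ℝ) : |logisticSigmoid v - 1/2 - v/4| ≤ |v|^3/16 := by
  have hd : ∀ x ∈ Set.uIcc 0 v, HasDerivWithinAt (fun t => logisticSigmoid t - t/4)
      (-(logisticSigmoid x - 1/2)^2) (Set.uIcc 0 v) x := by
    intro x _
    have h := (hasDerivAt_sig x).sub ((hasDerivAt_id x).div_const 4)
    have : (1/4 - (logisticSigmoid x - 1/2)^2) - 1/4 = -(logisticSigmoid x - 1/2)^2 := by ring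
    rw [this] at h
    exact h.hasDerivWithinAt
  have hb : ∀ x ∈ Set.uIcc 0 v, ‖-(logisticSigmoid x - 1/2)^2‖ ≤ v^2/16 := by
    intro x hx
    have hxv : |x| ≤ |v| := by
      rcases Set.mem_uIcc.mp hx with ⟨h1, h2⟩ | ⟨h1, h2⟩ <;>
        (rw [abs_le]; constructor <;> nlinarith [le_abs_self v, neg_abs_le v])
    have h := sig_near_half x
    rw [norm_neg, Real.norm_eq_abs, abs_pow]
    have h3 : |logisticSigmoid x - 1/2|^2 ≤ (|v|/4)^2 := by
      apply pow_le_pow_left₀ (abs_nonneg _)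
      calc |logisticSigmoid x - 1/2| ≤ |x|/4 := h
        _ ≤ |v|/4 := by linarith
    calc |logisticSigmoid x - 1/2|^2 ≤ (|v|/4)^2 := h3
      _ = v^2/16 := by rw [div_pow, sq_abs]; norm_num
  have h := Convex.norm_image_sub_le_of_norm_hasDerivWithin_le hd hb (convex_uIcc 0 v)
    Set.left_mem_uIcc Set.right_mem_uIcc
  have hσ0 : logisticSigmoid 0 = 1/2 := by norm_num [logisticSigmoid]
  rw [hσ0] at h
  simp only [Real.norm_eq_abs, sub_zero] at h
  have : v^2/16 * |v| = |v|^3/16 := by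
    rw [← sq_abs]; ring
  rw [this] at h
  calc |logisticSigmoid v - 1/2 - v/4| = |logisticSigmoid v - v/4 - (0/4 + 1/2)| := by ring_nf
    _ ≤ |v|^3/16 := by
        have : logisticSigmoid v - v/4 - (0/4 + 1/2) = logisticSigmoid v - v/4 - (1/2 - 0/4) := by ring
        rw [this]
        simpa using h

lemma promote_err {t : ℝ} (ht : 0 < t) (u : ℝ) :
    |4/t * logisticSigmoid (t*u) - 2/t - u| ≤ t^2 * |u|^3 / 4 := by
  have h := sig_taylor (t*u)
  have he : 4/t * logisticSigmoid (t*u) - 2/t - u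
      = (4/t) * (logisticSigmoid (t*u) - 1/2 - (t*u)/4) := by
    field_simp; ring
  rw [he, abs_mul, abs_of_pos (by positivity : (0:ℝ) < 4/t)]
  have habs : |t*u|^3 = t^3 * |u|^3 := by
    rw [abs_mul, abs_of_pos ht, mul_pow]
  calc 4/t * |logisticSigmoid (t*u) - 1/2 - (t*u)/4| ≤ 4/t * (|t*u|^3/16) := by
        apply mul_le_mul_of_nonneg_left h (by positivity)
    _ = t^2 * |u|^3 / 4 := by rw [habs]; field_simp; ring

def PA (n : ℕ) : ℕ → ((Fin n → ℝ) → ℝ) → Prop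
  | 0, F => ∃ (w : Fin n → ℝ) (c : ℝ), (∀ i, 0 ≤ w i) ∧ ∀ x, F x = (∑ i, w i * x i) + c
  | L + 1, F => ∃ (m : ℕ) (w : Fin m → ℝ) (G : Fin m → (Fin n → ℝ) → ℝ) (c : ℝ),
      (∀ j, 0 ≤ w j) ∧ (∀ j, PA n L (G j)) ∧
      ∀ x, F x = (∑ j, w j * logisticSigmoid (G j x)) + c

lemma PA_const (n L : ℕ) (c : ℝ) : PA n L (fun _ => c) := by
  cases L with
  | zero => exact ⟨0, c, fun i => le_refl 0, fun x => by simp⟩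
  | succ L =>
    exact ⟨0, fun j => j.elim0, fun j => j.elim0, c, fun j => j.elim0, fun j => j.elim0,
      fun x => by simp⟩

lemma PA_coord (n : ℕ) (p : Fin n) : PA n 0 (fun x => x p) := by
  refine ⟨fun i => if i = p then 1 else 0, 0, fun i => by dsimp; split <;> norm_num, fun x => ?_⟩
  rw [Finset.sum_congr rfl (fun i _ => by rw [ite_mul, one_mul, zero_mul])]
  rw [Finset.sum_ite_eq' Finset.univ p x]
  simp

lemma PA_add {n L : ℕ} {F G : (Fin n → ℝ) → ℝ} (hF : PA n L F) (hG : PA n L G) :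
    PA n L (fun x => F x + G x) := by
  cases L with
  | zero =>
    obtain ⟨w1, c1, h1, e1⟩ := hF; obtain ⟨w2, c2, h2, e2⟩ := hG
    refine ⟨fun i => w1 i + w2 i, c1 + c2, fun i => add_nonneg (h1 i) (h2 i), fun x => ?_⟩
    have hs : ∑ i, (w1 i + w2 i) * x i = (∑ i, w1 i * x i) + ∑ i, w2 i * x i := by
      rw [← Finset.sum_add_distrib]
      exact Finset.sum_congr rfl fun i _ => by ring
    show F x + G x = _
    rw [e1 x, e2 x, hs]; ring
  | succ L =>
    obtain ⟨m1, w1, G1, c1, h1, p1, e1⟩ := hF; obtain ⟨m2, w2, G2, c2, h2, p2, e2⟩ := hG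
    refine ⟨m1 + m2, Fin.append w1 w2, Fin.append G1 G2, c1 + c2, ?_, ?_, fun x => ?_⟩
    · refine Fin.addCases (fun i => ?_) (fun i => ?_) <;>
        simp [Fin.append_left, Fin.append_right] <;> [exact h1 i; exact h2 i]
    · refine Fin.addCases (fun i => ?_) (fun i => ?_) <;>
        simp [Fin.append_left, Fin.append_right] <;> [exact p1 i; exact p2 i]
    · show F x + G x = _
      rw [e1 x, e2 x, Fin.sum_univ_add]
      simp only [Fin.append_left, Fin.append_right]
      ring

lemma PA_smul {n L : ℕ} {F : (Fin n → ℝ) → ℝ} (hF : PA n L F) {a : ℝ} (ha : 0 ≤ a) :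
    PA n L (fun x => a * F x) := by
  cases L with
  | zero =>
    obtain ⟨w, c, h, e⟩ := hF
    refine ⟨fun i => a * w i, a * c, fun i => mul_nonneg ha (h i), fun x => ?_⟩
    show a * F x = _
    rw [e x, mul_add, Finset.mul_sum]
    congr 1
    exact Finset.sum_congr rfl fun i _ => by ring
  | succ L =>
    obtain ⟨m, w, G, c, h, p, e⟩ := hF
    refine ⟨m, fun j => a * w j, G, a * c, fun j => mul_nonneg ha (h j), p, fun x => ?_⟩
    show a * F x = _
    rw [e x, mul_add, Finset.mul_sum]
    congr 1
    exact Finset.sum_congr rfl fun j _ => by ring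

lemma sig_continuous : Continuous logisticSigmoid := by
  unfold logisticSigmoid
  apply Continuous.div continuous_const
  · exact continuous_const.add (Real.continuous_exp.comp continuous_neg)
  · intro x; positivity

lemma PA_continuous {n : ℕ} : ∀ {L : ℕ} {F : (Fin n → ℝ) → ℝ}, PA n L F → Continuous F := by
  intro L
  induction L with
  | zero =>
    intro F hF
    obtain ⟨w, c, _, e⟩ := hF
    have : F = fun x => (∑ i, w i * x i) + c := funext e
    rw [this]
    exact (continuous_finset_sum _ fun i _ => continuous_const.mul (continuous_apply i)).add
      continuous_const
  | succ L ih =>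
    intro F hF
    obtain ⟨m, w, G, c, _, p, e⟩ := hF
    have : F = fun x => (∑ j, w j * logisticSigmoid (G j x)) + c := funext e
    rw [this]
    exact (continuous_finset_sum _ fun j _ =>
      continuous_const.mul (sig_continuous.comp (ih (p j)))).add continuous_const

lemma PA_promote {n L : ℕ} {F : (Fin n → ℝ) → ℝ} (hF : PA n L F) {t : ℝ} (ht : 0 < t) :
    PA n (L+1) (fun x => 4/t * logisticSigmoid (t * F x) - 2/t) := by
  refine ⟨1, fun _ => 4/t, fun _ => fun x => t * F x, -(2/t), fun j => by positivity,
    fun j => PA_smul hF (le_of_lt ht), fun x => ?_⟩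
  rw [Fin.sum_univ_one]; ring

lemma PA_promote_many {n L : ℕ} {F : (Fin n → ℝ) → ℝ} (hF : PA n L F) (k : ℕ) {M : ℝ}
    (hM : 0 ≤ M) :
    ∀ ε : ℝ, 0 < ε → ∃ F', PA n (L + k) F' ∧ ∀ x, |F x| ≤ M → |F' x - F x| ≤ ε := by
  induction k with
  | zero =>
    intro ε hε
    exact ⟨F, hF, fun x _ => by simp [le_of_lt hε]⟩
  | succ k ih =>
    intro ε hε
    obtain ⟨F1, hF1, he1⟩ := ih (ε/2) (half_pos hε)
    obtain ⟨t, ht, ht1, ht2'⟩ : ∃ t : ℝ, 0 < t ∧ t ≤ 1 ∧ t * ((M + ε/2)^3/4 + 1) ≤ ε/2 := by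
      have hden : (0:ℝ) < (M + ε/2)^3/4 + 1 := by positivity
      refine ⟨min 1 ((ε/2)/((M + ε/2)^3/4 + 1)), lt_min one_pos (by positivity),
        min_le_left _ _, ?_⟩
      have h := min_le_right 1 ((ε/2)/((M + ε/2)^3/4 + 1))
      calc min 1 ((ε/2)/((M + ε/2)^3/4 + 1)) * ((M + ε/2)^3/4 + 1)
          ≤ ((ε/2)/((M + ε/2)^3/4 + 1)) * ((M + ε/2)^3/4 + 1) :=
            mul_le_mul_of_nonneg_right h hden.le
        _ = ε/2 := by field_simp
    refine ⟨fun x => 4/t * logisticSigmoid (t * F1 x) - 2/t, PA_promote hF1 ht, fun x hx => ?_⟩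
    have h1 := he1 x hx
    have hb1 : |F1 x| ≤ M + ε/2 := by
      have h' : F1 x = F x + (F1 x - F x) := by ring
      calc |F1 x| = |F x + (F1 x - F x)| := by rw [← h']
        _ ≤ |F x| + |F1 x - F x| := abs_add_le _ _
        _ ≤ M + ε/2 := add_le_add hx h1
    have h2 := promote_err ht (F1 x)
    have hcube : |F1 x|^3 ≤ (M + ε/2)^3 := pow_le_pow_left₀ (abs_nonneg _) hb1 3
    have htsq : t^2 ≤ t := by nlinarith
    have hmul : t^2 * |F1 x|^3 ≤ t * (M + ε/2)^3 :=
      mul_le_mul htsq hcube (pow_nonneg (abs_nonneg _) 3) (le_of_lt ht)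
    have h3 : t^2 * |F1 x|^3 / 4 ≤ ε/2 := by
      have hexp : t*((M + ε/2)^3/4+1) = t*(M + ε/2)^3/4 + t := by ring
      linarith
    calc |4/t * logisticSigmoid (t * F1 x) - 2/t - F x|
        ≤ |4/t * logisticSigmoid (t * F1 x) - 2/t - F1 x| + |F1 x - F x| := abs_sub_le _ _ _
      _ ≤ ε/2 + ε/2 := add_le_add (le_trans h2 h3) h1
      _ = ε := by ring

lemma count_le' {η v : ℝ} (hη : 0 < η) (hv0 : 0 ≤ v) (s : Finset ℕ)
    (hsub : ∀ k ∈ s, ((k:ℝ)+1)*η ≤ v) : η * (s.card:ℝ) ≤ v := by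
  have hsub2 : s ⊆ Finset.range (⌊v/η⌋₊) := fun k hk => by
    rw [Finset.mem_range]
    have h1 : ((k:ℝ)+1) ≤ v/η := (le_div_iff₀ hη).mpr (hsub k hk)
    have h2 : k+1 ≤ ⌊v/η⌋₊ := Nat.le_floor (by exact_mod_cast h1)
    omega
  have h3 : (s.card:ℝ) ≤ (⌊v/η⌋₊:ℝ) := by
    have := Finset.card_le_card hsub2
    rw [Finset.card_range] at this
    exact_mod_cast this
  have h4 : (⌊v/η⌋₊:ℝ) ≤ v/η := Nat.floor_le (by positivity)
  calc η * (s.card:ℝ) ≤ η * (v/η) := by nlinarith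
    _ = v := by field_simp

lemma count_ge' {η v : ℝ} (hη : 0 < η) (hv0 : 0 ≤ v) {K : ℕ} (hvK : v ≤ K*η) (s : Finset ℕ)
    (hmem : ∀ k, k < K → ((k:ℝ)+1)*η ≤ v → k ∈ s) : v - η ≤ η * (s.card:ℝ) := by
  have hsub : Finset.range (min K ⌊v/η⌋₊) ⊆ s := fun k hk => by
    rw [Finset.mem_range] at hk
    apply hmem k (lt_of_lt_of_le hk (min_le_left _ _))
    have hk2 : k+1 ≤ ⌊v/η⌋₊ := by
      have := lt_of_lt_of_le hk (min_le_right _ _); omega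
    have h1 : ((k:ℝ)+1) ≤ (⌊v/η⌋₊:ℝ) := by exact_mod_cast hk2
    have h2 : (⌊v/η⌋₊:ℝ) ≤ v/η := Nat.floor_le (by positivity)
    have h3 : ((k:ℝ)+1) ≤ v/η := le_trans h1 h2
    calc ((k:ℝ)+1)*η ≤ (v/η)*η := by nlinarith
      _ = v := by field_simp
  have hcard : ((min K ⌊v/η⌋₊ : ℕ):ℝ) ≤ (s.card:ℝ) := by
    have := Finset.card_le_card hsub
    rw [Finset.card_range] at this
    exact_mod_cast this
  have hmono := mul_le_mul_of_nonneg_left hcard (le_of_lt hη)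
  rcases le_total (⌊v/η⌋₊) K with h | h
  · have hmin : min K ⌊v/η⌋₊ = ⌊v/η⌋₊ := min_eq_right h
    rw [hmin] at hmono
    have h2 := Nat.lt_floor_add_one (v/η)
    have h3 : v/η - 1 < (⌊v/η⌋₊:ℝ) := by linarith
    have h4 : v - η ≤ η*((⌊v/η⌋₊:ℕ):ℝ) := by
      have h5 : η*(v/η - 1) < η*(⌊v/η⌋₊:ℝ) := by
        exact mul_lt_mul_of_pos_left h3 hη
      have h6 : η*(v/η - 1) = v - η := by field_simp
      push_cast
      linarith
    linarith
  · have hmin : min K ⌊v/η⌋₊ = K := min_eq_left h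
    rw [hmin] at hmono
    have : (K:ℝ)*η = η*(K:ℝ) := by ring
    linarith

lemma staircase {η ρ v : ℝ} {K : ℕ} (hη : 0 < η) (hρ : 0 ≤ ρ) (g : ℕ → ℝ)
    (hg0 : ∀ k, 0 ≤ g k) (hg1 : ∀ k, g k ≤ 1)
    (hup : ∀ k, k < K → ((k:ℝ)+1)*η ≤ v → 1 - ρ ≤ g k)
    (hdn : ∀ k, k < K → v ≤ ((k:ℝ)+1)*η - η → g k ≤ ρ)
    (hv0 : 0 ≤ v) (hvK : v ≤ (K:ℝ)*η) :
    |η * (∑ k ∈ Finset.range K, g k) - v| ≤ 2*η + ρ*η*(K:ℝ) := by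
  classical
  set s := (Finset.range K).filter (fun k : ℕ => ((k:ℝ)+1)*η ≤ v) with hs
  set s' := (Finset.range K).filter (fun k : ℕ => ((k:ℝ)+1)*η ≤ v + η) with hs'
  -- lower bound on the sum
  have hlow : (1-ρ) * (s.card:ℝ) ≤ ∑ k ∈ Finset.range K, g k := by
    have h1 : ∑ k ∈ s, g k ≤ ∑ k ∈ Finset.range K, g k :=
      Finset.sum_le_sum_of_subset_of_nonneg (Finset.filter_subset _ _) (fun k _ _ => hg0 k)
    have h2 : ∑ k ∈ s, (1-ρ) ≤ ∑ k ∈ s, g k := by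
      apply Finset.sum_le_sum
      intro k hk
      rw [hs, Finset.mem_filter, Finset.mem_range] at hk
      exact hup k hk.1 hk.2
    have h3 : ∑ k ∈ s, (1-ρ) = (s.card:ℝ) * (1-ρ) := by
      rw [Finset.sum_const, nsmul_eq_mul]
    nlinarith
  -- upper bound on the sum
  have hupb : ∑ k ∈ Finset.range K, g k ≤ (s'.card:ℝ) + ρ*(K:ℝ) := by
    have hsplit := Finset.sum_filter_add_sum_filter_not (Finset.range K)
      (fun k : ℕ => ((k:ℝ)+1)*η ≤ v + η) g
    have h5 : ∑ k ∈ s', g k ≤ (s'.card:ℝ) := by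
      calc ∑ k ∈ s', g k ≤ ∑ k ∈ s', (1:ℝ) := Finset.sum_le_sum fun k _ => hg1 k
        _ = (s'.card:ℝ) := by rw [Finset.sum_const, nsmul_eq_mul]; ring
    have h6 : ∑ k ∈ (Finset.range K).filter (fun k : ℕ => ¬(((k:ℝ)+1)*η ≤ v + η)), g k
        ≤ ρ*(K:ℝ) := by
      have h7 : ∀ k ∈ (Finset.range K).filter (fun k : ℕ => ¬(((k:ℝ)+1)*η ≤ v + η)), g k ≤ ρ := by
        intro k hk
        rw [Finset.mem_filter, Finset.mem_range] at hk
        apply hdn k hk.1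
        have := hk.2
        push_neg at this
        linarith
      calc ∑ k ∈ (Finset.range K).filter (fun k : ℕ => ¬(((k:ℝ)+1)*η ≤ v + η)), g k
          ≤ ∑ k ∈ (Finset.range K).filter (fun k : ℕ => ¬(((k:ℝ)+1)*η ≤ v + η)), ρ :=
            Finset.sum_le_sum h7
        _ = (((Finset.range K).filter (fun k : ℕ => ¬(((k:ℝ)+1)*η ≤ v + η))).card : ℝ) * ρ := by
            rw [Finset.sum_const, nsmul_eq_mul]
        _ ≤ (K:ℝ) * ρ := by
            have hc := Finset.card_filter_le (Finset.range K)
              (fun k : ℕ => ¬(((k:ℝ)+1)*η ≤ v + η))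
            rw [Finset.card_range] at hc
            have : (((Finset.range K).filter (fun k : ℕ => ¬(((k:ℝ)+1)*η ≤ v + η))).card : ℝ)
                ≤ (K:ℝ) := by exact_mod_cast hc
            nlinarith
        _ = ρ*(K:ℝ) := by ring
    rw [← hsplit]
    exact add_le_add h5 h6
  -- count bounds
  have hcle : η * (s'.card:ℝ) ≤ v + η := by
    apply count_le' hη (by linarith)
    intro k hk
    rw [hs', Finset.mem_filter] at hk
    exact hk.2
  have hcge : v - η ≤ η * (s.card:ℝ) := by
    apply count_ge' hη hv0 hvK
    intro k hk1 hk2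
    rw [hs, Finset.mem_filter, Finset.mem_range]
    exact ⟨hk1, hk2⟩
  have hsKnat : s.card ≤ K := by
    rw [hs]
    calc ((Finset.range K).filter (fun k : ℕ => ((k:ℝ)+1)*η ≤ v)).card
        ≤ (Finset.range K).card := Finset.card_filter_le _ _
      _ = K := Finset.card_range K
  have hsK : (s.card:ℝ) ≤ (K:ℝ) := Nat.cast_le.mpr hsKnat
  rw [abs_le]
  constructor
  · -- v - (2η + ρηK) ≤ ηΣ
    have hm1 := mul_le_mul_of_nonneg_left hlow (le_of_lt hη)
    have hexp : η*((1-ρ)*(s.card:ℝ)) = η*(s.card:ℝ) - ρ*(η*(s.card:ℝ)) := by ring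
    have hrm : ρ*(η*(s.card:ℝ)) ≤ ρ*(η*(K:ℝ)) := by
      apply mul_le_mul_of_nonneg_left _ hρ
      exact mul_le_mul_of_nonneg_left hsK (le_of_lt hη)
    nlinarith
  · have hm2 := mul_le_mul_of_nonneg_left hupb (le_of_lt hη)
    have hexp : η*((s'.card:ℝ) + ρ*(K:ℝ)) = η*(s'.card:ℝ) + ρ*η*(K:ℝ) := by ring
    nlinarith

lemma sig_ge_of_ge {T u : ℝ} (h : T ≤ u) : 1 - Real.exp (-T) ≤ logisticSigmoid u := by
  have h1 := one_sub_sig_le u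
  have h2 : Real.exp (-u) ≤ Real.exp (-T) := Real.exp_le_exp.mpr (by linarith)
  linarith

lemma sig_le_of_le {T u : ℝ} (h : u ≤ -T) : logisticSigmoid u ≤ Real.exp (-T) :=
  le_trans (sig_le_exp u) (Real.exp_le_exp.mpr h)

lemma continuous_sup'' {α : Type*} [TopologicalSpace α] {ι : Type*} (f : ι → α → ℝ) :
    ∀ (s : Finset ι) (hs : s.Nonempty), (∀ i, Continuous (f i)) →
    Continuous (fun x => s.sup' hs (fun i => f i x)) := by
  intro s
  induction s using Finset.cons_induction with
  | empty => intro hs; exact absurd hs (by simp)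
  | cons a s ha ih =>
    intro hs hf
    rcases s.eq_empty_or_nonempty with rfl | hs'
    · have hfun : (fun x => (Finset.cons a ∅ ha).sup' hs (fun i => f i x)) = f a := by
        funext x
        simp
      rw [hfun]
      exact hf a
    · have hfun : (fun x => (Finset.cons a s ha).sup' hs (fun i => f i x))
          = fun x => max (f a x) (s.sup' hs' (fun i => f i x)) := by
        funext x
        rw [Finset.sup'_cons hs']
      rw [hfun]
      exact (hf a).max (ih hs' hf)

set_option maxHeartbeats 3000000 in
lemma sep_lemma : ∀ (e n : ℕ) (A B : Set (Fin n → ℝ)), IsCompact A → IsCompact B →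
    ∀ κ : ℝ, 0 < κ → (∀ a ∈ A, ∀ b ∈ B, ∃ i : Fin n, i.val < e + 1 ∧ a i + κ ≤ b i) →
    ∀ T : ℝ, 0 ≤ T →
    ∃ F, PA n e F ∧ (∀ a ∈ A, F a ≤ -T) ∧ (∀ b ∈ B, T ≤ F b) := by
  intro e
  induction e with
  | zero =>
    intro n A B hA hB κ hκ hsep T hT
    by_cases hBe : B = ∅
    · exact ⟨fun _ => -T, PA_const n 0 (-T), fun a _ => le_refl _,
        fun b hb => by rw [hBe] at hb; exact absurd hb (Set.notMem_empty b)⟩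
    by_cases hAe : A = ∅
    · exact ⟨fun _ => T, PA_const n 0 T,
        fun a ha => by rw [hAe] at ha; exact absurd ha (Set.notMem_empty a),
        fun b _ => le_refl _⟩
    obtain ⟨a₀, ha₀⟩ := Set.nonempty_iff_ne_empty.mpr hAe
    obtain ⟨b₀, hb₀⟩ := Set.nonempty_iff_ne_empty.mpr hBe
    obtain ⟨i₀, hi₀, _⟩ := hsep a₀ ha₀ b₀ hb₀
    have hkey : ∀ a ∈ A, ∀ b ∈ B, a i₀ + κ ≤ b i₀ := by
      intro a ha b hb
      obtain ⟨i, hi, h⟩ := hsep a ha b hb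
      have hii : i = i₀ := Fin.ext (by omega)
      rwa [hii] at h
    set sA := sSup ((fun a => a i₀) '' A) with hsA
    have himg : IsCompact ((fun a => a i₀) '' A) := hA.image (continuous_apply i₀)
    have hbdd : BddAbove ((fun a => a i₀) '' A) := himg.bddAbove
    have hne : ((fun a => a i₀) '' A).Nonempty := ⟨a₀ i₀, Set.mem_image_of_mem _ ha₀⟩
    have hle : ∀ a ∈ A, a i₀ ≤ sA := fun a ha => le_csSup hbdd (Set.mem_image_of_mem _ ha)
    have hgt : ∀ b ∈ B, sA + κ ≤ b i₀ := by
      intro b hb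
      have h1 : sA ≤ b i₀ - κ := csSup_le hne (by
        rintro y ⟨a, ha, rfl⟩
        linarith [hkey a ha b hb])
      linarith
    refine ⟨fun x => (2*T/κ) * (x i₀ - (sA + κ/2)), ?_, ?_, ?_⟩
    · have h1 : PA n 0 (fun x => x i₀) := PA_coord n i₀
      have h2 : PA n 0 (fun x : Fin n → ℝ => (2*T/κ) * x i₀) := PA_smul h1 (by positivity)
      have h3 : PA n 0 (fun _ : Fin n → ℝ => (2*T/κ) * (-(sA + κ/2))) := PA_const _ _ _
      have h4 := PA_add h2 h3
      have heq : (fun x : Fin n → ℝ => (2*T/κ) * (x i₀ - (sA + κ/2)))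
          = fun x => (2*T/κ) * x i₀ + (2*T/κ) * (-(sA + κ/2)) := by
        funext x; ring
      rw [heq]
      exact h4
    · intro a ha
      have h1 : a i₀ - (sA + κ/2) ≤ -(κ/2) := by linarith [hle a ha]
      have h2 : (2*T/κ) * (a i₀ - (sA+κ/2)) ≤ (2*T/κ) * (-(κ/2)) :=
        mul_le_mul_of_nonneg_left h1 (by positivity)
      have h3 : (2*T/κ) * (-(κ/2)) = -T := by field_simp <;> ring
      linarith
    · intro b hb
      have h1 : κ/2 ≤ b i₀ - (sA + κ/2) := by linarith [hgt b hb]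
      have h2 : (2*T/κ)*(κ/2) ≤ (2*T/κ)*(b i₀ - (sA+κ/2)) :=
        mul_le_mul_of_nonneg_left h1 (by positivity)
      have h3 : (2*T/κ)*(κ/2) = T := by field_simp <;> ring
      linarith
  | succ e ih =>
    intro n A B hA hB κ hκ hsep T hT
    classical
    by_cases hBe : B = ∅
    · exact ⟨fun _ => -T, PA_const _ _ _, fun a _ => le_refl _,
        fun b hb => by rw [hBe] at hb; exact absurd hb (Set.notMem_empty b)⟩
    by_cases hAe : A = ∅
    · exact ⟨fun _ => T, PA_const _ _ _,
        fun a ha => by rw [hAe] at ha; exact absurd ha (Set.notMem_empty a),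
        fun b _ => le_refl _⟩
    obtain ⟨a₀, ha₀⟩ := Set.nonempty_iff_ne_empty.mpr hAe
    obtain ⟨b₀, hb₀⟩ := Set.nonempty_iff_ne_empty.mpr hBe
    have hC : IsCompact (A ∪ B) := hA.union hB
    by_cases hen : n ≤ e + 1
    · -- all coordinates available already at budget e
      have hsep' : ∀ a ∈ A, ∀ b ∈ B, ∃ i : Fin n, i.val < e + 1 ∧ a i + κ ≤ b i := by
        intro a ha b hb
        obtain ⟨i, hi, h⟩ := hsep a ha b hb
        exact ⟨i, by omega, h⟩
      obtain ⟨F₀, hF₀, hFa, hFb⟩ := ih n A B hA hB κ hκ hsep' (T+1) (by linarith)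
      have hcont := PA_continuous hF₀
      obtain ⟨M₀, hM₀⟩ := hC.exists_bound_of_continuousOn hcont.continuousOn
      have hM : (0:ℝ) ≤ max M₀ 0 := le_max_right _ _
      obtain ⟨F', hF', he'⟩ := PA_promote_many hF₀ 1 hM 1 one_pos
      refine ⟨F', hF', ?_, ?_⟩
      · intro a ha
        have hb1 : |F₀ a| ≤ max M₀ 0 := by
          have := hM₀ a (Set.mem_union_left _ ha)
          rw [Real.norm_eq_abs] at this
          exact le_trans this (le_max_left _ _)
        have h1 := abs_le.mp (he' a hb1)
        have h2 := hFa a ha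
        linarith
      · intro b hb
        have hb1 : |F₀ b| ≤ max M₀ 0 := by
          have := hM₀ b (Set.mem_union_right _ hb)
          rw [Real.norm_eq_abs] at this
          exact le_trans this (le_max_left _ _)
        have h1 := abs_le.mp (he' b hb1)
        have h2 := hFb b hb
        linarith
    · push_neg at hen
      set p : Fin n := ⟨e+1, hen⟩ with hp
      haveI : Nonempty (Fin n) := ⟨⟨0, by omega⟩⟩
      -- radius bound
      obtain ⟨r, hr⟩ := (Metric.isBounded_iff_subset_closedBall 0).mp hC.isBounded
      set R := max r 0 with hRdef
      have hRnn : (0:ℝ) ≤ R := le_max_right _ _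
      have hRb : ∀ x ∈ A ∪ B, ∀ i : Fin n, |x i| ≤ R := by
        intro x hx i
        have h1 := hr hx
        rw [Metric.mem_closedBall] at h1
        have h2 := dist_le_pi_dist x 0 i
        have h3 : dist (x i) ((0 : Fin n → ℝ) i) = |x i| := by
          simp [Real.dist_eq]
        rw [h3] at h2
        calc |x i| ≤ dist x 0 := h2
          _ ≤ r := h1
          _ ≤ R := le_max_left _ _
      set L₀ := (4*R + 2*κ)/κ with hL₀def
      have hL₀pos : 0 < L₀ := by positivity
      set μ := min (κ/2) 1 with hμdef
      have hμpos : 0 < μ := lt_min (by linarith) one_pos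
      have hμ1 : μ ≤ 1 := min_le_right _ _
      have hμκ : μ ≤ κ/2 := min_le_left _ _
      set η := μ/8 with hηdef
      have hηpos : 0 < η := by positivity
      -- the penalty function
      set pen : (Fin n → ℝ) → (Fin n → ℝ) → ℝ := fun bb x =>
        Finset.univ.sup' Finset.univ_nonempty
          (fun i : Fin n => if i.val < e+1 then max (bb i - x i - κ/2) 0 else 0) with hpendef
      have hpen_term : ∀ bb y (i : Fin n),
          (if i.val < e+1 then max (bb i - y i - κ/2) 0 else 0) ≤ pen bb y :=
        fun bb y i => Finset.le_sup'
          (fun i : Fin n => if i.val < e+1 then max (bb i - y i - κ/2) 0 else 0)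
          (Finset.mem_univ i)
      have hpen_nonneg : ∀ bb x, 0 ≤ pen bb x := by
        intro bb x
        have h := hpen_term bb x ⟨0, by omega⟩
        by_cases hi : (0:ℕ) < e+1
        · rw [if_pos hi] at h
          exact le_trans (le_max_right _ _) h
        · omega
      have hpen_self : ∀ bb, pen bb bb = 0 := by
        intro bb
        apply le_antisymm _ (hpen_nonneg bb bb)
        apply Finset.sup'_le
        intro i _
        by_cases hi : i.val < e+1
        · rw [if_pos hi]
          apply max_le (by linarith) le_rfl
        · rw [if_neg hi]
      have hpen_lb : ∀ bb x (i : Fin n), i.val < e+1 → bb i - x i - κ/2 ≤ pen bb x := by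
        intro bb x i hi
        have h := hpen_term bb x i
        rw [if_pos hi] at h
        exact le_trans (le_max_left _ _) h
      have hpen_shift : ∀ bb x y δ, 0 ≤ δ → (∀ i : Fin n, i.val < e+1 → y i ≤ x i + δ) →
          pen bb x ≤ pen bb y + δ := by
        intro bb x y δ hδ hxy
        apply Finset.sup'_le
        intro i _
        by_cases hi : i.val < e+1
        · rw [if_pos hi]
          have h0 := hpen_term bb y i
          rw [if_pos hi] at h0
          have h1 := hxy i hi
          apply max_le
          · have : bb i - x i - κ/2 ≤ (bb i - y i - κ/2) + δ := by linarith
            calc bb i - x i - κ/2 ≤ (bb i - y i - κ/2) + δ := this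
              _ ≤ max (bb i - y i - κ/2) 0 + δ := by
                  linarith [le_max_left (bb i - y i - κ/2) (0:ℝ)]
              _ ≤ pen bb y + δ := by linarith
          · linarith [hpen_nonneg bb y]
        · rw [if_neg hi]
          linarith [hpen_nonneg bb y]
      -- tau
      set tau : (Fin n → ℝ) → ℝ :=
        fun x => sInf ((fun bb => bb p - κ/2 + L₀ * pen bb x) '' B) with htaudef
      have htau_bdd : ∀ x, BddBelow ((fun bb => bb p - κ/2 + L₀ * pen bb x) '' B) := by
        intro x
        refine ⟨-R - κ/2, ?_⟩
        rintro y ⟨bb, hbb, rfl⟩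
        have h1 := abs_le.mp (hRb bb (Set.mem_union_right _ hbb) p)
        have h2 := hpen_nonneg bb x
        nlinarith [hL₀pos.le]
      have htau_ne : ∀ x, ((fun bb => bb p - κ/2 + L₀ * pen bb x) '' B).Nonempty :=
        fun x => ⟨_, Set.mem_image_of_mem _ hb₀⟩
      have htau_le : ∀ x bb, bb ∈ B → tau x ≤ bb p - κ/2 + L₀ * pen bb x :=
        fun x bb hbb => csInf_le (htau_bdd x) (Set.mem_image_of_mem _ hbb)
      have htau_ge : ∀ x c, (∀ bb ∈ B, c ≤ bb p - κ/2 + L₀ * pen bb x) → c ≤ tau x :=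
        fun x c h => le_csInf (htau_ne x) (by rintro y ⟨bb, hbb, rfl⟩; exact h bb hbb)
      -- clamped h
      set hfun : (Fin n → ℝ) → ℝ := fun x => max (-(R+1)) (min (R+1) (-(tau x))) with hhdef
      have hfun_bd : ∀ x, |hfun x| ≤ R+1 := by
        intro x
        rw [abs_le]
        constructor
        · exact le_max_left _ _
        · exact max_le (by linarith) (min_le_left _ _)
      have hmargB : ∀ bb ∈ B, μ ≤ hfun bb + bb p := by
        intro bb hbb
        have h1 : tau bb ≤ bb p - κ/2 := by
          have h := htau_le bb bb hbb
          rw [hpen_self bb] at h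
          linarith
        have h2 : κ/2 - bb p ≤ -(tau bb) := by linarith
        have h3 := abs_le.mp (hRb bb (Set.mem_union_right _ hbb) p)
        have h4 : min (R+1) (κ/2 - bb p) ≤ min (R+1) (-(tau bb)) := min_le_min le_rfl h2
        have h5 : μ - bb p ≤ min (R+1) (κ/2 - bb p) := le_min (by linarith) (by linarith)
        have h6 : min (R+1) (-(tau bb)) ≤ hfun bb := le_max_right _ _
        linarith
      have hmargA : ∀ aa ∈ A, hfun aa + aa p ≤ -μ := by
        intro aa haa
        have h3 := abs_le.mp (hRb aa (Set.mem_union_left _ haa) p)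
        have h1 : aa p + κ/2 ≤ tau aa := by
          apply htau_ge
          intro bb hbb
          obtain ⟨i, hi, hsep2⟩ := hsep aa haa bb hbb
          by_cases hie : i.val < e+1
          · have h4 := hpen_lb bb aa i hie
            have h6 : κ/2 ≤ pen bb aa := by linarith
            have h5 := abs_le.mp (hRb bb (Set.mem_union_right _ hbb) p)
            have h7 : L₀ * (κ/2) ≤ L₀ * pen bb aa :=
              mul_le_mul_of_nonneg_left h6 hL₀pos.le
            have h8 : L₀ * (κ/2) = 2*R + κ := by
              rw [hL₀def]; field_simp; ring
            linarith
          · have hip : i = p := by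
              apply Fin.ext
              show i.val = e+1
              omega
            rw [hip] at hsep2
            have h9 := mul_nonneg hL₀pos.le (hpen_nonneg bb aa)
            linarith
        have h2 : -(tau aa) ≤ -(aa p) - κ/2 := by linarith
        have h4 : min (R+1) (-(tau aa)) ≤ -(aa p) - κ/2 := le_trans (min_le_right _ _) h2
        have h6 : max (-(R+1)) (-(aa p) - κ/2) ≤ -(aa p) - μ := max_le (by linarith) (by linarith)
        have h5 : hfun aa ≤ max (-(R+1)) (-(aa p) - κ/2) := max_le_max le_rfl h4
        linarith
      -- key Lipschitz/monotone property
      have hkey : ∀ x y δ, 0 ≤ δ → (∀ i : Fin n, i.val < e+1 → y i ≤ x i + δ) →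
          hfun y ≤ hfun x + L₀*δ := by
        intro x y δ hδ hxy
        have hLδ : 0 ≤ L₀*δ := mul_nonneg hL₀pos.le hδ
        have h2 : tau x - L₀*δ ≤ tau y := by
          apply htau_ge
          intro bb hbb
          have h3 := htau_le x bb hbb
          have h4 := hpen_shift bb x y δ hδ hxy
          nlinarith [mul_le_mul_of_nonneg_left h4 hL₀pos.le]
        have h5 : -(tau y) ≤ -(tau x) + L₀*δ := by linarith
        apply max_le
        · linarith [le_max_left (-(R+1)) (min (R+1) (-(tau x)))]
        · have h6 : min (R+1) (-(tau y)) ≤ min (R+1) (-(tau x) + L₀*δ) := min_le_min le_rfl h5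
          have h7 : min (R+1) (-(tau x) + L₀*δ) ≤ min (R+1) (-(tau x)) + L₀*δ := by
            rw [← min_add_add_right]
            exact min_le_min (by linarith) le_rfl
          linarith [le_max_right (-(R+1)) (min (R+1) (-(tau x)))]
      have hfun_cont : Continuous hfun := by
        have hlip : ∀ x y, dist (hfun x) (hfun y) ≤ (⟨L₀, hL₀pos.le⟩ : NNReal) * dist x y := by
          intro x y
          have hdx : ∀ i : Fin n, i.val < e+1 → y i ≤ x i + dist x y := by
            intro i _
            have h := dist_le_pi_dist x y i
            rw [Real.dist_eq] at h
            have := abs_le.mp h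
            linarith [this.1, this.2]
          have hdy : ∀ i : Fin n, i.val < e+1 → x i ≤ y i + dist x y := by
            intro i _
            have h := dist_le_pi_dist x y i
            rw [Real.dist_eq] at h
            have := abs_le.mp h
            linarith [this.1, this.2]
          have h1 := hkey x y (dist x y) dist_nonneg hdx
          have h2 := hkey y x (dist x y) dist_nonneg hdy
          rw [Real.dist_eq, abs_le]
          constructor <;> simp only [NNReal.coe_mk] <;> linarith
        exact (LipschitzWith.of_dist_le_mul hlip).continuous
      -- levels
      obtain ⟨K1, hK1η⟩ : ∃ K1 : ℕ, 2*R+2 ≤ (K1:ℝ)*η := by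
        refine ⟨⌈(2*R+2)/η⌉₊, ?_⟩
        have h := Nat.le_ceil ((2*R+2)/η)
        rw [div_le_iff₀ hηpos] at h
        linarith
      obtain ⟨T', hT'nn, hexpT'⟩ : ∃ T' : ℝ, 0 ≤ T' ∧ Real.exp (-T') = ((K1:ℝ)+1)⁻¹ := by
        refine ⟨Real.log ((K1:ℝ)+1), Real.log_nonneg ?_, ?_⟩
        · have h0 : (0:ℝ) ≤ (K1:ℝ) := Nat.cast_nonneg K1
          linarith
        · rw [Real.exp_neg, Real.exp_log (by positivity)]
      have hρnn : (0:ℝ) ≤ ((K1:ℝ)+1)⁻¹ := by positivity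
      have hρK : ((K1:ℝ)+1)⁻¹*(K1:ℝ) ≤ 1 := by
        have h1 : (K1:ℝ) ≤ (K1:ℝ)+1 := by linarith
        calc ((K1:ℝ)+1)⁻¹*(K1:ℝ) ≤ ((K1:ℝ)+1)⁻¹*((K1:ℝ)+1) :=
              mul_le_mul_of_nonneg_left h1 hρnn
          _ = 1 := by
              field_simp
      -- per-level classifiers from the induction hypothesis
      have hsetup : ∀ k : ℕ, ∃ Fk, PA n e Fk ∧
          (∀ x, x ∈ A ∪ B → hfun x ≤ (-(R+1) + ((k:ℝ)+1)*η) - η → Fk x ≤ -T') ∧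
          (∀ x, x ∈ A ∪ B → (-(R+1) + ((k:ℝ)+1)*η) ≤ hfun x → T' ≤ Fk x) := by
        intro k
        set sk := -(R+1) + ((k:ℝ)+1)*η with hskdef
        have hAk : IsCompact ((A ∪ B) ∩ {x | hfun x ≤ sk - η}) :=
          hC.inter_right (isClosed_le hfun_cont continuous_const)
        have hBk : IsCompact ((A ∪ B) ∩ {x | sk ≤ hfun x}) :=
          hC.inter_right (isClosed_le continuous_const hfun_cont)
        have hsepk : ∀ a ∈ (A ∪ B) ∩ {x | hfun x ≤ sk - η},
            ∀ b ∈ (A ∪ B) ∩ {x | sk ≤ hfun x},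
            ∃ i : Fin n, i.val < e + 1 ∧ a i + η/(2*L₀) ≤ b i := by
          intro a ha b hb
          by_contra hcon
          push_neg at hcon
          have h1 : hfun b ≤ hfun a + L₀*(η/(2*L₀)) := by
            apply hkey a b _ (by positivity)
            intro i hi
            rcases lt_or_ge i.val (e+1) with hie | hie
            · exact le_of_lt (hcon i hie)
            · exact le_of_lt (hcon i (by omega))
          have h2 : L₀*(η/(2*L₀)) = η/2 := by field_simp
          have h3 : hfun a ≤ sk - η := ha.2
          have h4 : sk ≤ hfun b := hb.2
          rw [h2] at h1
          linarith
        obtain ⟨Fk, hk1, hk2, hk3⟩ := ih n _ _ hAk hBk (η/(2*L₀)) (by positivity) hsepk T' hT'nn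
        exact ⟨Fk, hk1, fun x hx hfx => hk2 x ⟨hx, hfx⟩, fun x hx hfx => hk3 x ⟨hx, hfx⟩⟩
      choose Fc hFcPA hFcA hFcB using hsetup
      -- staircase approximation G of hfun
      set G : (Fin n → ℝ) → ℝ :=
        fun x => (∑ k ∈ Finset.range K1, η * logisticSigmoid (Fc k x)) + (-(R+1)) with hGdef
      have hGPA : PA n (e+1) G := by
        refine ⟨K1, fun _ => η, fun k => Fc k.val, -(R+1), fun j => hηpos.le,
          fun j => hFcPA j.val, fun x => ?_⟩
        show (∑ k ∈ Finset.range K1, η * logisticSigmoid (Fc k x)) + (-(R+1)) = _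
        rw [← Fin.sum_univ_eq_sum_range (fun k => η * logisticSigmoid (Fc k x)) K1]
      have hGacc : ∀ x, x ∈ A ∪ B → |G x - hfun x| ≤ 3*η := by
        intro x hx
        have hbd := abs_le.mp (hfun_bd x)
        have hst := staircase (v := hfun x + (R+1)) (K := K1) hηpos hρnn
          (fun k => logisticSigmoid (Fc k x))
          (fun k => (sig_pos _).le) (fun k => (sig_lt_one _).le)
          (fun k _ hk => by
            have hmem : (-(R+1) + ((k:ℝ)+1)*η) ≤ hfun x := by linarith
            have h := hFcB k x hx hmem
            rw [← hexpT']
            exact sig_ge_of_ge h)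
          (fun k _ hk => by
            have hmem : hfun x ≤ (-(R+1) + ((k:ℝ)+1)*η) - η := by linarith
            have h := hFcA k x hx hmem
            rw [← hexpT']
            exact sig_le_of_le (by linarith))
          (by linarith) (by linarith)
        have hG1 : G x - hfun x
            = η * (∑ k ∈ Finset.range K1, logisticSigmoid (Fc k x)) - (hfun x + (R+1)) := by
          rw [hGdef, Finset.mul_sum]
          ring
        rw [hG1]
        have hρKη : ((K1:ℝ)+1)⁻¹*η*(K1:ℝ) ≤ η := by
          have := mul_le_mul_of_nonneg_left hρK hηpos.le
          calc ((K1:ℝ)+1)⁻¹*η*(K1:ℝ) = η*(((K1:ℝ)+1)⁻¹*(K1:ℝ)) := by ring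
            _ ≤ η*1 := mul_le_mul_of_nonneg_left hρK hηpos.le
            _ = η := by ring
        calc |η * (∑ k ∈ Finset.range K1, logisticSigmoid (Fc k x)) - (hfun x + (R+1))|
            ≤ 2*η + ((K1:ℝ)+1)⁻¹*η*(K1:ℝ) := hst
          _ ≤ 3*η := by linarith
      -- passthrough of coordinate p
      obtain ⟨P, hPPA0, hPacc⟩ := PA_promote_many (PA_coord n p) (e+1) hRnn η hηpos
      have hPPA : PA n (e+1) P := by rwa [Nat.zero_add] at hPPA0
      -- final function
      have hTμ : 0 ≤ 2*T/μ := div_nonneg (by linarith) hμpos.le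
      refine ⟨fun x => (2*T/μ) * (P x + G x), PA_smul (PA_add hPPA hGPA) hTμ, ?_, ?_⟩
      · intro a ha
        have h1 := abs_le.mp (hPacc a (hRb a (Set.mem_union_left _ ha) p))
        have h2 := abs_le.mp (hGacc a (Set.mem_union_left _ ha))
        have h3 := hmargA a ha
        have h4 : P a + G a ≤ -(μ/2) := by
          rw [hηdef] at h1 h2
          linarith
        have h5 : (2*T/μ) * (P a + G a) ≤ (2*T/μ) * (-(μ/2)) :=
          mul_le_mul_of_nonneg_left h4 hTμ
        have h6 : (2*T/μ) * (-(μ/2)) = -T := by field_simp <;> ring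
        linarith
      · intro b hb
        have h1 := abs_le.mp (hPacc b (hRb b (Set.mem_union_right _ hb) p))
        have h2 := abs_le.mp (hGacc b (Set.mem_union_right _ hb))
        have h3 := hmargB b hb
        have h4 : μ/2 ≤ P b + G b := by
          rw [hηdef] at h1 h2
          linarith
        have h5 : (2*T/μ) * (μ/2) ≤ (2*T/μ) * (P b + G b) :=
          mul_le_mul_of_nonneg_left h4 hTμ
        have h6 : (2*T/μ) * (μ/2) = T := by field_simp <;> ring
        linarith

def extz {n : ℕ} (x : Fin n → ℝ) : ℕ → ℝ := fun k => if h : k < n then x ⟨k, h⟩ else 0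

noncomputable def nval (wd : ℕ → ℕ) (W : ℕ → ℕ → ℕ → ℝ) (b : ℕ → ℕ → ℝ) :
    ℕ → (ℕ → ℝ) → ℕ → ℝ
  | 0, x => x
  | L + 1, x => fun i =>
      logisticSigmoid ((∑ m ∈ Finset.range (wd L), W L i m * nval wd W b L x m) + b L i)

lemma nval_congr {wd wd' : ℕ → ℕ} {W W' : ℕ → ℕ → ℕ → ℝ} {b b' : ℕ → ℕ → ℝ} (L : ℕ)
    (hwd : ∀ l, l < L → wd l = wd' l) (hW : ∀ l, l < L → W l = W' l)
    (hb : ∀ l, l < L → b l = b' l) :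
    ∀ x i, nval wd W b L x i = nval wd' W' b' L x i := by
  induction L with
  | zero => intro x i; rfl
  | succ L ih =>
    intro x i
    show logisticSigmoid _ = logisticSigmoid _
    congr 1
    rw [hwd L (Nat.lt_succ_self L), hW L (Nat.lt_succ_self L), hb L (Nat.lt_succ_self L)]
    congr 1
    apply Finset.sum_congr rfl
    intro m _
    rw [ih (fun l hl => hwd l (by omega)) (fun l hl => hW l (by omega))
      (fun l hl => hb l (by omega))]

lemma PAvec {n : ℕ} : ∀ (L : ℕ) (ι : Type) [Fintype ι] [DecidableEq ι]
    (G : ι → (Fin n → ℝ) → ℝ), (∀ j, PA n L (G j)) →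
    ∃ (wd : ℕ → ℕ) (W : ℕ → ℕ → ℕ → ℝ) (b : ℕ → ℕ → ℝ) (v : ι → ℕ → ℝ) (c : ι → ℝ),
      wd 0 = n ∧ (∀ l i k, 0 ≤ W l i k) ∧ (∀ j i, 0 ≤ v j i) ∧
      ∀ (x : Fin n → ℝ) (j : ι), G j x =
        (∑ i ∈ Finset.range (wd L), v j i * nval wd W b L (extz x) i) + c j := by
  intro L
  induction L with
  | zero =>
    intro ι instF instD G hG
    choose w c hw he using hG
    refine ⟨fun _ => n, fun _ _ _ => 0, fun _ _ => 0,
      fun j i => if h : i < n then w j ⟨i, h⟩ else 0, c, rfl,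
      fun l i k => le_rfl, ?_, ?_⟩
    · intro j i
      dsimp only
      split
      · exact hw j _
      · exact le_rfl
    · intro x j
      rw [he j x]
      congr 1
      rw [← Fin.sum_univ_eq_sum_range
        (fun i => (if h : i < n then w j ⟨i, h⟩ else 0) *
          nval (fun _ => n) (fun _ _ _ => 0) (fun _ _ => 0) 0 (extz x) i) n]
      apply Finset.sum_congr rfl
      intro i _
      have h0 : nval (fun _ => n) (fun _ _ _ => 0) (fun _ _ => 0) 0 (extz x) i.val = x i := by
        show extz x i.val = x i
        rw [extz, dif_pos i.isLt]
      rw [h0, dif_pos i.isLt]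
  | succ L ih =>
    intro ι instF instD G hG
    choose m w Gsub c hw hPA he using hG
    obtain ⟨wd, W, b, v, cc, hwd0, hWnn, hvnn, hval⟩ :=
      ih (Σ j : ι, Fin (m j)) (fun p => Gsub p.1 p.2) (fun p => hPA p.1 p.2)
    set N := Fintype.card (Σ j : ι, Fin (m j)) with hNdef
    set eqv := Fintype.equivFin (Σ j : ι, Fin (m j)) with heqvdef
    set wd2 : ℕ → ℕ := fun l => if l = L+1 then N else wd l with hwd2def
    set W2 : ℕ → ℕ → ℕ → ℝ := fun l i k =>
      if l = L then (if h : i < N then v (eqv.symm ⟨i, h⟩) k else 0) else W l i k with hW2def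
    set b2 : ℕ → ℕ → ℝ := fun l i =>
      if l = L then (if h : i < N then cc (eqv.symm ⟨i, h⟩) else 0) else b l i with hb2def
    set v2 : ι → ℕ → ℝ := fun j i => if h : i < N then
      (∑ k : Fin (m j), if eqv.symm ⟨i, h⟩ = ⟨j, k⟩ then w j k else 0) else 0 with hv2def
    refine ⟨wd2, W2, b2, v2, c, ?_, ?_, ?_, ?_⟩
    · show (if 0 = L + 1 then N else wd 0) = n
      rw [if_neg (by omega)]
      exact hwd0
    · intro l i k
      show 0 ≤ (if l = L then (if h : i < N then v (eqv.symm ⟨i, h⟩) k else 0) else W l i k)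
      split_ifs with h1 h2
      · exact hvnn _ _
      · exact le_rfl
      · exact hWnn l i k
    · intro j i
      show 0 ≤ (if h : i < N then
        (∑ k : Fin (m j), if eqv.symm ⟨i, h⟩ = ⟨j, k⟩ then w j k else 0) else 0)
      split_ifs with h1
      · refine Finset.sum_nonneg fun k _ => ?_
        split_ifs with h2
        · exact hw j k
        · exact le_rfl
      · exact le_rfl
    · intro x j
      rw [he j x]
      have hr : wd2 (L+1) = N := by
        show (if L+1 = L+1 then N else wd (L+1)) = N
        rw [if_pos rfl]
      rw [hr]
      congr 1
      have hagree : ∀ (xx : ℕ → ℝ) (i : ℕ), nval wd2 W2 b2 L xx i = nval wd W b L xx i :=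
        nval_congr L
          (fun l hl => by
            show (if l = L+1 then N else wd l) = wd l
            rw [if_neg (by omega)])
          (fun l hl => by
            funext i k
            show (if l = L then _ else W l i k) = W l i k
            rw [if_neg (by omega)])
          (fun l hl => by
            funext i
            show (if l = L then _ else b l i) = b l i
            rw [if_neg (by omega)])
      have hunit : ∀ p : Σ j : ι, Fin (m j),
          nval wd2 W2 b2 (L+1) (extz x) ((eqv p).val)
            = logisticSigmoid (Gsub p.1 p.2 x) := by
        intro p
        show logisticSigmoid ((∑ k ∈ Finset.range (wd2 L),
            W2 L (eqv p).val k * nval wd2 W2 b2 L (extz x) k) + b2 L (eqv p).val) = _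
        congr 1
        have hwL : wd2 L = wd L := by
          show (if L = L+1 then N else wd L) = wd L
          rw [if_neg (by omega)]
        have heta : (⟨(eqv p).val, (eqv p).isLt⟩ : Fin N) = eqv p := Fin.eta _ _
        have hWL : ∀ k, W2 L (eqv p).val k = v p k := by
          intro k
          show (if L = L then (if h : (eqv p).val < N then v (eqv.symm ⟨(eqv p).val, h⟩) k
            else 0) else W L (eqv p).val k) = v p k
          rw [if_pos rfl, dif_pos (eqv p).isLt, heta, Equiv.symm_apply_apply]
        have hbL : b2 L (eqv p).val = cc p := by
          show (if L = L then (if h : (eqv p).val < N then cc (eqv.symm ⟨(eqv p).val, h⟩)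
            else 0) else b L (eqv p).val) = cc p
          rw [if_pos rfl, dif_pos (eqv p).isLt, heta, Equiv.symm_apply_apply]
        have hsum : ∑ k ∈ Finset.range (wd2 L), W2 L (eqv p).val k * nval wd2 W2 b2 L (extz x) k
            = ∑ k ∈ Finset.range (wd L), v p k * nval wd W b L (extz x) k := by
          rw [hwL]
          exact Finset.sum_congr rfl fun k _ => by rw [hWL k, hagree (extz x) k]
        rw [hsum, hbL]
        exact (hval x p).symm
      rw [← Fin.sum_univ_eq_sum_range
        (fun i => v2 j i * nval wd2 W2 b2 (L+1) (extz x) i) N]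
      rw [← Equiv.sum_comp eqv
        (fun q : Fin N => v2 j q.val * nval wd2 W2 b2 (L+1) (extz x) q.val)]
      have hterm : ∀ p : Σ j : ι, Fin (m j),
          v2 j (eqv p).val * nval wd2 W2 b2 (L+1) (extz x) ((eqv p).val)
            = ∑ k : Fin (m j), (if p = ⟨j, k⟩ then w j k * logisticSigmoid (Gsub p.1 p.2 x)
              else 0) := by
        intro p
        rw [hunit p]
        have heta : (⟨(eqv p).val, (eqv p).isLt⟩ : Fin N) = eqv p := Fin.eta _ _
        show (if h : (eqv p).val < N then
            (∑ k : Fin (m j), if eqv.symm ⟨(eqv p).val, h⟩ = ⟨j, k⟩ then w j k else 0) else 0)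
            * logisticSigmoid (Gsub p.1 p.2 x) = _
        rw [dif_pos (eqv p).isLt, heta, Equiv.symm_apply_apply, Finset.sum_mul]
        apply Finset.sum_congr rfl
        intro k _
        rw [ite_mul, zero_mul]
      rw [Finset.sum_congr rfl (fun p _ => hterm p)]
      rw [Finset.sum_comm]
      apply Finset.sum_congr rfl
      intro k _
      rw [Finset.sum_ite_eq' Finset.univ (⟨j, k⟩ : Σ j : ι, Fin (m j))
        (fun p => w j k * logisticSigmoid (Gsub p.1 p.2 x))]
      simp

lemma nval_toFin (wd : ℕ → ℕ) (Wn : ℕ → ℕ → ℕ → ℝ) (bn : ℕ → ℕ → ℝ) :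
    ∀ (L : ℕ) (x : Fin (wd 0) → ℝ) (i : Fin (wd L)),
      sigmoidLayers wd (fun l i k => Wn l i.val k.val) (fun l i => bn l i.val) L x i
        = nval wd Wn bn L (fun k => if h : k < wd 0 then x ⟨k, h⟩ else 0) i.val := by
  intro L
  induction L with
  | zero =>
    intro x i
    show x i = _
    have h0 : nval wd Wn bn 0 (fun k => if h : k < wd 0 then x ⟨k, h⟩ else 0) i.val
        = (if h : i.val < wd 0 then x ⟨i.val, h⟩ else 0) := rfl
    rw [h0, dif_pos i.isLt]
  | succ L ih =>
    intro x i
    show logisticSigmoid _ = logisticSigmoid _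
    congr 1
    have hsum : (∑ k : Fin (wd L), Wn L i.val k.val *
        sigmoidLayers wd (fun l i k => Wn l i.val k.val) (fun l i => bn l i.val) L x k)
        = ∑ k ∈ Finset.range (wd L), Wn L i.val k *
            nval wd Wn bn L (fun k => if h : k < wd 0 then x ⟨k, h⟩ else 0) k := by
      rw [← Fin.sum_univ_eq_sum_range
        (fun k => Wn L i.val k * nval wd Wn bn L (fun k => if h : k < wd 0 then x ⟨k, h⟩ else 0) k)
        (wd L)]
      apply Finset.sum_congr rfl
      intro k _
      rw [ih x k]
    rw [hsum]


/-- (Daniels & Velikova, Theorem 3.1) Every continuous, coordinatewise non-decreasing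
function on a compact set `S ⊂ ℝ^d` can be uniformly approximated to within any `ε > 0`
by a feedforward network with at most `d` hidden layers, logistic sigmoid activations in
the hidden layers, a single linear output neuron, nonnegative weights, and arbitrary
biases. -/
theorem daniels_velikova {d : ℕ} (S : Set (Fin d → ℝ)) (hS : IsCompact S)
    (f : (Fin d → ℝ) → ℝ) (hcont : ContinuousOn f S)
    (hmono : ∀ x ∈ S, ∀ x' ∈ S, (∀ i, x i ≤ x' i) → f x ≤ f x')
    (ε : ℝ) (hε : 0 < ε) :
    ∃ (dims : ℕ → ℕ) (hd : dims 0 = d) (L : ℕ),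
      L ≤ d ∧
      ∃ (W : (l : ℕ) → Fin (dims (l + 1)) → Fin (dims l) → ℝ)
        (b : (l : ℕ) → Fin (dims (l + 1)) → ℝ)
        (wout : Fin (dims L) → ℝ) (bout : ℝ),
        (∀ l i m, 0 ≤ W l i m) ∧ (∀ i, 0 ≤ wout i) ∧
        ∀ x ∈ S,
          |f x -
              ((∑ i, wout i *
                  sigmoidLayers dims W b L (fun i => x (Fin.cast hd i)) i) + bout)| < ε := by

  classical
  by_cases hSe : S = ∅
  · refine ⟨fun _ => d, rfl, 0, Nat.zero_le d, fun _ _ _ => 0, fun _ _ => 0, fun _ => 0, 0,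
      fun l i m => le_rfl, fun i => le_rfl, ?_⟩
    intro x hx
    rw [hSe] at hx
    exact absurd hx (Set.notMem_empty x)
  obtain ⟨x₀, hx₀⟩ := Set.nonempty_iff_ne_empty.mpr hSe
  rcases Nat.eq_zero_or_pos d with hd0 | hdpos
  · subst hd0
    refine ⟨fun _ => 0, rfl, 0, le_rfl, fun _ _ _ => 0, fun _ _ => 0, fun i => 0, f x₀,
      fun l i m => le_rfl, fun i => le_rfl, ?_⟩
    intro x hx
    have hxx : x = x₀ := funext fun i => i.elim0
    rw [hxx]
    simpa using hε
  -- main case: d ≥ 1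
  set η := ε/4 with hηdef
  have hη : 0 < η := by rw [hηdef]; positivity
  have himgc : IsCompact (f '' S) := hS.image_of_continuousOn hcont
  set c0 := sInf (f '' S) with hc0def
  set c1 := sSup (f '' S) with hc1def
  have hlb : ∀ x ∈ S, c0 ≤ f x := fun x hx => csInf_le himgc.bddBelow (Set.mem_image_of_mem f hx)
  have hub : ∀ x ∈ S, f x ≤ c1 := fun x hx => le_csSup himgc.bddAbove (Set.mem_image_of_mem f hx)
  have hc01 : c0 ≤ c1 := le_trans (hlb x₀ hx₀) (hub x₀ hx₀)
  obtain ⟨K, hKη⟩ : ∃ K : ℕ, c1 - c0 ≤ (K:ℝ)*η := by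
    refine ⟨⌈(c1 - c0)/η⌉₊, ?_⟩
    have h := Nat.le_ceil ((c1 - c0)/η)
    rw [div_le_iff₀ hη] at h
    linarith
  obtain ⟨T, hTnn, hexpT⟩ : ∃ T : ℝ, 0 ≤ T ∧ Real.exp (-T) = ((K:ℝ)+1)⁻¹ := by
    refine ⟨Real.log ((K:ℝ)+1), Real.log_nonneg ?_, ?_⟩
    · have h0 : (0:ℝ) ≤ (K:ℝ) := Nat.cast_nonneg K
      linarith
    · rw [Real.exp_neg, Real.exp_log (by positivity)]
  have hK0 : (0:ℝ) ≤ (K:ℝ) := Nat.cast_nonneg K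
  have hρnn : (0:ℝ) ≤ ((K:ℝ)+1)⁻¹ := by positivity
  have hρK : ((K:ℝ)+1)⁻¹*(K:ℝ) ≤ 1 := by
    have h1 : (K:ℝ) ≤ (K:ℝ)+1 := by linarith
    calc ((K:ℝ)+1)⁻¹*(K:ℝ) ≤ ((K:ℝ)+1)⁻¹*((K:ℝ)+1) := mul_le_mul_of_nonneg_left h1 hρnn
      _ = 1 := by field_simp
  have hSclosed : IsClosed S := hS.isClosed
  haveI : Nonempty (Fin d) := ⟨⟨0, hdpos⟩⟩
  have hsetup : ∀ k : ℕ, ∃ Fk, PA d (d-1) Fk ∧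
      (∀ x ∈ S, f x ≤ (c0 + ((k:ℝ)+1)*η) - η → Fk x ≤ -T) ∧
      (∀ x ∈ S, (c0 + ((k:ℝ)+1)*η) ≤ f x → T ≤ Fk x) := by
    intro k
    set tk := c0 + ((k:ℝ)+1)*η with htkdef
    have hAkc : IsCompact (S ∩ f ⁻¹' Set.Iic (tk - η)) :=
      IsCompact.of_isClosed_subset hS
        (hcont.preimage_isClosed_of_isClosed hSclosed isClosed_Iic) Set.inter_subset_left
    have hBkc : IsCompact (S ∩ f ⁻¹' Set.Ici tk) :=
      IsCompact.of_isClosed_subset hS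
        (hcont.preimage_isClosed_of_isClosed hSclosed isClosed_Ici) Set.inter_subset_left
    have hsepk : ∃ κ : ℝ, 0 < κ ∧ ∀ a ∈ S ∩ f ⁻¹' Set.Iic (tk - η),
        ∀ b ∈ S ∩ f ⁻¹' Set.Ici tk, ∃ i : Fin d, a i + κ ≤ b i := by
      rcases Set.eq_empty_or_nonempty (S ∩ f ⁻¹' Set.Iic (tk - η)) with hAe | hAne
      · exact ⟨1, one_pos, fun a ha => by
          rw [hAe] at ha; exact absurd ha (Set.notMem_empty a)⟩
      rcases Set.eq_empty_or_nonempty (S ∩ f ⁻¹' Set.Ici tk) with hBe | hBne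
      · exact ⟨1, one_pos, fun a ha b hb => by
          rw [hBe] at hb; exact absurd hb (Set.notMem_empty b)⟩
      set g : (Fin d → ℝ) × (Fin d → ℝ) → ℝ :=
        fun q => Finset.univ.sup' Finset.univ_nonempty (fun i => q.2 i - q.1 i) with hgdef
      have hgcont : Continuous g := by
        apply continuous_sup''
        intro i
        exact ((continuous_apply i).comp continuous_snd).sub
          ((continuous_apply i).comp continuous_fst)
      obtain ⟨q₀, hq₀mem, hq₀min⟩ := (hAkc.prod hBkc).exists_isMinOn (hAne.prod hBne)
        hgcont.continuousOn
      have hq₀A : q₀.1 ∈ S ∩ f ⁻¹' Set.Iic (tk - η) := (Set.mem_prod.mp hq₀mem).1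
      have hq₀B : q₀.2 ∈ S ∩ f ⁻¹' Set.Ici tk := (Set.mem_prod.mp hq₀mem).2
      have hpos : 0 < g q₀ := by
        by_contra hcon
        push_neg at hcon
        have hall : ∀ i : Fin d, q₀.2 i ≤ q₀.1 i := by
          intro i
          have h := (Finset.sup'_le_iff Finset.univ_nonempty
            (fun i => q₀.2 i - q₀.1 i)).mp hcon i (Finset.mem_univ i)
          linarith
        have hmle := hmono q₀.2 hq₀B.1 q₀.1 hq₀A.1 hall
        have h1 : f q₀.1 ≤ tk - η := hq₀A.2
        have h2 : tk ≤ f q₀.2 := hq₀B.2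
        linarith
      refine ⟨g q₀, hpos, ?_⟩
      intro a ha b hb
      have h1 : g q₀ ≤ g (a, b) := hq₀min (Set.mem_prod.mpr ⟨ha, hb⟩)
      obtain ⟨i, _, h3⟩ := (Finset.le_sup'_iff Finset.univ_nonempty).mp h1
      exact ⟨i, by linarith⟩
    obtain ⟨κ, hκ, hsepk'⟩ := hsepk
    have hsep'' : ∀ a ∈ S ∩ f ⁻¹' Set.Iic (tk - η), ∀ b ∈ S ∩ f ⁻¹' Set.Ici tk,
        ∃ i : Fin d, i.val < (d-1) + 1 ∧ a i + κ ≤ b i := by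
      intro a ha b hb
      obtain ⟨i, h⟩ := hsepk' a ha b hb
      exact ⟨i, by omega, h⟩
    obtain ⟨Fk, h1, h2, h3⟩ := sep_lemma (d-1) d _ _ hAkc hBkc κ hκ hsep'' T hTnn
    exact ⟨Fk, h1, fun x hx hfx => h2 x ⟨hx, hfx⟩, fun x hx hfx => h3 x ⟨hx, hfx⟩⟩
  choose Fc hFcPA hFcA hFcB using hsetup
  obtain ⟨d', rfl⟩ : ∃ d', d = d' + 1 := ⟨d - 1, by omega⟩
  set Ffin : (Fin (d'+1) → ℝ) → ℝ :=
    fun x => (∑ k ∈ Finset.range K, η * logisticSigmoid (Fc k x)) + c0 with hFfindef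
  have hFfinPA : PA (d'+1) (d'+1) Ffin := by
    refine ⟨K, fun _ => η, fun k => Fc k.val, c0, fun j => hη.le, fun j => ?_, fun x => ?_⟩
    · exact hFcPA j.val
    · show (∑ k ∈ Finset.range K, η * logisticSigmoid (Fc k x)) + c0 = _
      rw [← Fin.sum_univ_eq_sum_range (fun k => η * logisticSigmoid (Fc k x)) K]
  have hacc : ∀ x ∈ S, |Ffin x - f x| ≤ 3*η := by
    intro x hx
    have hst := staircase (v := f x - c0) (K := K) hη hρnn (fun k => logisticSigmoid (Fc k x))
      (fun k => (sig_pos _).le) (fun k => (sig_lt_one _).le)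
      (fun k _ hk => by
        have h := hFcB k x hx (by linarith)
        rw [← hexpT]
        exact sig_ge_of_ge h)
      (fun k _ hk => by
        have h := hFcA k x hx (by linarith)
        rw [← hexpT]
        exact sig_le_of_le (by linarith))
      (by linarith [hlb x hx]) (by linarith [hub x hx])
    have hG1 : Ffin x - f x
        = η * (∑ k ∈ Finset.range K, logisticSigmoid (Fc k x)) - (f x - c0) := by
      rw [hFfindef]
      show (∑ k ∈ Finset.range K, η * logisticSigmoid (Fc k x)) + c0 - f x = _
      rw [Finset.mul_sum]
      ring
    rw [hG1]
    have hρKη : ((K:ℝ)+1)⁻¹*η*(K:ℝ) ≤ η := by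
      calc ((K:ℝ)+1)⁻¹*η*(K:ℝ) = η*(((K:ℝ)+1)⁻¹*(K:ℝ)) := by ring
        _ ≤ η*1 := mul_le_mul_of_nonneg_left hρK hη.le
        _ = η := by ring
    calc |η * (∑ k ∈ Finset.range K, logisticSigmoid (Fc k x)) - (f x - c0)|
        ≤ 2*η + ((K:ℝ)+1)⁻¹*η*(K:ℝ) := hst
      _ ≤ 3*η := by linarith
  obtain ⟨wd, Wn, bn, v, cb, hwd0, hWnn, hvnn, hval⟩ :=
    PAvec (d'+1) (Fin 1) (fun _ => Ffin) (fun _ => hFfinPA)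
  refine ⟨wd, hwd0, d'+1, le_rfl, fun l i k => Wn l i.val k.val, fun l i => bn l i.val,
    fun i => v 0 i.val, cb 0, fun l i k => hWnn l i.val k.val, fun i => hvnn 0 i.val, ?_⟩
  intro x hx
  have hext : (fun k => if h : k < wd 0 then (fun i => x (Fin.cast hwd0 i)) ⟨k, h⟩ else 0)
      = extz x := by
    funext k
    by_cases h : k < d'+1
    · rw [dif_pos (by omega : k < wd 0)]
      have h1 : extz x k = x ⟨k, h⟩ := dif_pos h
      rw [h1]
      show x (Fin.cast hwd0 ⟨k, by omega⟩) = x ⟨k, h⟩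
      exact congrArg x (Fin.ext (by simp))
    · rw [dif_neg (by omega : ¬ k < wd 0)]
      show (0:ℝ) = extz x k
      rw [extz, dif_neg h]
  have hnet : (∑ i : Fin (wd (d'+1)), v 0 i.val *
      sigmoidLayers wd (fun l i k => Wn l i.val k.val) (fun l i => bn l i.val) (d'+1)
        (fun i => x (Fin.cast hwd0 i)) i) + cb 0 = Ffin x := by
    have heach : ∀ i : Fin (wd (d'+1)),
        sigmoidLayers wd (fun l i k => Wn l i.val k.val) (fun l i => bn l i.val) (d'+1)
          (fun i => x (Fin.cast hwd0 i)) i = nval wd Wn bn (d'+1) (extz x) i.val := by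
      intro i
      rw [nval_toFin wd Wn bn (d'+1) (fun i => x (Fin.cast hwd0 i)) i, hext]
    rw [Finset.sum_congr rfl (fun i _ => by rw [heach i])]
    rw [Fin.sum_univ_eq_sum_range (fun i => v 0 i * nval wd Wn bn (d'+1) (extz x) i) (wd (d'+1))]
    exact (hval x 0).symm
  rw [hnet]
  have h1 := hacc x hx
  rw [abs_sub_comm] at h1
  calc |f x - Ffin x| ≤ 3*η := h1
    _ < ε := by rw [hηdef]; linarith
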